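/- Smooth regularizer gap bound: under the preceding context (R convex and L'-smooth, φ_k strongly convex and smooth), the local-global gap satisfies l_π(a) ≤ (1/p)∑_{k=1}^p (L'' /2)((L_k+L)/μ_k)² ‖a - w*‖² for all a, where L'' is a smoothness constant of P_k(·;a) (independent of a). In particular there exists a constant γ < ∞ with l_π(a) ≤ γ‖a-w*‖² for all a. -/

import Mathlib

open InnerProductSpace Filter Set Topology

variable {E : Type*} [NormedAddCommGroup E] [InnerProductSpace ℝ E] [CompleteSpace E]

local notation "⟪" x ", " y "⟫" => @inner ℝ _ _ x y

/-- convex + zero gradient implies global min -/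
lemma aux_grad_min {f : E → ℝ} {x : E} (hf : ConvexOn ℝ Set.univ f)
    (hx : HasGradientAt f (0 : E) x) : IsMinOn f Set.univ x := by
  rw [isMinOn_iff]
  intro y _
  set ψ : ℝ → ℝ := fun t => f (x + t • (y - x)) with hψdef
  have hline : HasDerivAt (fun t : ℝ => x + t • (y - x)) (y - x) 0 := by
    simpa using ((hasDerivAt_id (0:ℝ)).smul_const (y - x)).const_add x
  have hd : HasDerivAt ψ 0 0 := by
    have hx' : HasFDerivAt f ((InnerProductSpace.toDual ℝ E) 0) (x + (0:ℝ) • (y - x)) := by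
      simpa using hx.hasFDerivAt
    have h := hx'.comp_hasDerivAt (0:ℝ) hline
    simp at h
    exact h
  have hψconv : ConvexOn ℝ Set.univ ψ := by
    have := hf.comp_affineMap (AffineMap.lineMap x y : ℝ →ᵃ[ℝ] E)
    have heq : ψ = f ∘ (AffineMap.lineMap x y : ℝ →ᵃ[ℝ] E) := by
      funext t
      simp [hψdef, AffineMap.lineMap_apply, add_comm]
    rw [heq]
    simpa using this
  have hslope : Tendsto (slope ψ 0) (𝓝[>] (0:ℝ)) (𝓝 0) :=
    (hasDerivAt_iff_tendsto_slope.mp hd).mono_left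
      (nhdsWithin_mono _ (fun t ht => ne_of_gt ht))
  have hub : ∀ᶠ t in 𝓝[>] (0:ℝ), slope ψ 0 t ≤ ψ 1 - ψ 0 := by
    filter_upwards [Ioo_mem_nhdsGT_of_mem (Set.mem_Ico.mpr ⟨le_refl (0:ℝ), zero_lt_one⟩)]
      with t ht
    have := hψconv.secant_mono (Set.mem_univ (0:ℝ)) (Set.mem_univ t) (Set.mem_univ 1)
      (ne_of_gt ht.1) one_ne_zero ht.2.le
    simpa [slope_def_field, div_one] using this
  have h0 : (0:ℝ) ≤ ψ 1 - ψ 0 := le_of_tendsto hslope hub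
  have hψ1 : ψ 1 = f y := by simp [hψdef]
  have hψ0 : ψ 0 = f x := by simp [hψdef]
  simp only [hψ1, hψ0] at h0
  linarith

/-- quadratic growth at a minimizer of a strongly convex function -/
lemma aux_qg {f : E → ℝ} {μ : ℝ} (hf : StrongConvexOn Set.univ μ f)
    {x : E} (hx : IsMinOn f Set.univ x) (y : E) :
    f x + μ / 2 * ‖y - x‖ ^ 2 ≤ f y := by
  set C : ℝ := μ / 2 * ‖x - y‖ ^ 2 with hC
  have key : ∀ t : ℝ, 0 < t → t ≤ 1 → f x + C ≤ f y + t * C := by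
    intro t ht0 ht1
    have h2 := hf.2 (Set.mem_univ x) (Set.mem_univ y)
      (show (0:ℝ) ≤ 1 - t by linarith) ht0.le (by ring)
    have hmin := hx (Set.mem_univ ((1 - t) • x + t • y))
    simp only [smul_eq_mul] at h2
    have : f x ≤ (1 - t) * f x + t * f y - (1 - t) * t * C := le_trans hmin h2
    nlinarith
  have hnorm : ‖y - x‖ = ‖x - y‖ := norm_sub_rev _ _
  rw [hnorm]
  by_cases hC0 : C ≤ 0
  · have := key 1 zero_lt_one le_rfl
    linarith
  · push_neg at hC0
    have : ∀ ε : ℝ, 0 < ε → f x + C ≤ f y + ε := by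
      intro ε hε
      have htpos : 0 < min 1 (ε / C) := lt_min zero_lt_one (div_pos hε hC0)
      have := key _ htpos (min_le_left _ _)
      have h2 : min 1 (ε / C) * C ≤ ε := by
        calc min 1 (ε / C) * C ≤ (ε / C) * C :=
              mul_le_mul_of_nonneg_right (min_le_right _ _) hC0.le
          _ = ε := div_mul_cancel₀ ε (ne_of_gt hC0)
      linarith
    linarith [le_of_forall_pos_le_add this]

/-- strong convexity is preserved by adding a linear functional -/
lemma aux_sc_linear {f : E → ℝ} {μ : ℝ} (hf : StrongConvexOn Set.univ μ f) (v : E) :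
    StrongConvexOn Set.univ μ (fun w => f w + ⟪v, w⟫) := by
  refine ⟨convex_univ, fun x _ y _ a b ha hb hab => ?_⟩
  have h := hf.2 (Set.mem_univ x) (Set.mem_univ y) ha hb hab
  have hlin : ⟪v, a • x + b • y⟫ = a * ⟪v, x⟫ + b * ⟪v, y⟫ := by
    rw [inner_add_right, real_inner_smul_right, real_inner_smul_right]
  simp only [smul_eq_mul] at h ⊢
  rw [hlin]
  linarith

/-- minimizer perturbation bound for strongly convex functions -/
lemma aux_pert {f : E → ℝ} {μ : ℝ} (hμ : 0 < μ) (hf : StrongConvexOn Set.univ μ f)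
    (v : E) {x y : E} (hx : IsMinOn f Set.univ x)
    (hy : IsMinOn (fun w => f w + ⟪v, w⟫) Set.univ y) :
    ‖x - y‖ ≤ ‖v‖ / μ := by
  have hg : StrongConvexOn Set.univ μ (fun w => f w + ⟪v, w⟫) := aux_sc_linear hf v
  have h1 := aux_qg hf hx y
  have h2 := aux_qg hg hy x
  have hsum : μ * ‖x - y‖ ^ 2 ≤ ⟪v, x - y⟫ := by
    rw [inner_sub_right]
    have hn : ‖y - x‖ = ‖x - y‖ := norm_sub_rev _ _
    rw [hn] at h1
    nlinarith
  have hcs : ⟪v, x - y⟫ ≤ ‖v‖ * ‖x - y‖ := real_inner_le_norm v (x - y)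
  rcases eq_or_ne x y with h | h
  · simp [h]
    positivity
  · have hpos : 0 < ‖x - y‖ := norm_pos_iff.mpr (sub_ne_zero.mpr h)
    rw [le_div_iff₀ hμ]
    nlinarith [hsum, hcs, hpos, sq_nonneg (‖x - y‖)]

/-- Smooth regularizer gap bound: the local-global gap satisfies
`l_π(a) ≤ (1/p)∑ₖ (L''/2)((Lₖ+L)/μₖ)² ‖a - w*‖²`; in particular it is bounded
by `γ‖a - w*‖²` for some constant `γ`. -/
theorem local_global_gap_smooth_reg
    (d p : ℕ) (hp : 0 < p)
    (F R : EuclideanSpace ℝ (Fin d) → ℝ)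
    (φ : Fin p → EuclideanSpace ℝ (Fin d) → ℝ)
    (gF gR : EuclideanSpace ℝ (Fin d) → EuclideanSpace ℝ (Fin d))
    (gφ : Fin p → EuclideanSpace ℝ (Fin d) → EuclideanSpace ℝ (Fin d))
    (μk Lk : Fin p → ℝ) (L L' L'' : ℝ)
    (hμk : ∀ k, 0 < μk k) (hLk : ∀ k, 0 ≤ Lk k) (hL : 0 ≤ L) (hL'' : 0 ≤ L'')
    (hFavg : ∀ w, F w = (1 / (p : ℝ)) * ∑ k, φ k w)
    (hFgrad : ∀ x, HasGradientAt F (gF x) x)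
    (hRgrad : ∀ x, HasGradientAt R (gR x) x)
    (hφgrad : ∀ k x, HasGradientAt (φ k) (gφ k x) x)
    (hRconv : ConvexOn ℝ Set.univ R)
    (hRlip : ∀ x y, ‖gR x - gR y‖ ≤ L' * ‖x - y‖)
    (hsc : ∀ k, StrongConvexOn Set.univ (μk k) (fun w => φ k w + R w))
    (hφlip : ∀ k x y, ‖gφ k x - gφ k y‖ ≤ Lk k * ‖x - y‖)
    (hFlip : ∀ x y, ‖gF x - gF y‖ ≤ L * ‖x - y‖)
    (wstar : EuclideanSpace ℝ (Fin d))
    (hwstar : IsMinOn (fun w => F w + R w) Set.univ wstar)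
    (Pk : Fin p → EuclideanSpace ℝ (Fin d) → EuclideanSpace ℝ (Fin d) → ℝ)
    (hPk : ∀ k w a, Pk k w a = φ k w + inner ℝ (gF a - gφ k a) w + R w)
    (wk : Fin p → EuclideanSpace ℝ (Fin d) → EuclideanSpace ℝ (Fin d))
    (hwk : ∀ k a, IsMinOn (fun w => Pk k w a) Set.univ (wk k a))
    -- `L''`-smoothness of `P_k(·;a)` around its minimizer (independent of `a`)
    (hsmooth : ∀ k a w, Pk k w a ≤ Pk k (wk k a) a + L'' / 2 * ‖w - wk k a‖ ^ 2) :
    (∀ a, (F wstar + R wstar) - (1 / (p : ℝ)) * ∑ k, Pk k (wk k a) a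
        ≤ ((1 / (p : ℝ)) * ∑ k, L'' / 2 * ((Lk k + L) / μk k) ^ 2) * ‖a - wstar‖ ^ 2) ∧
    (∃ γ : ℝ, ∀ a, (F wstar + R wstar) - (1 / (p : ℝ)) * ∑ k, Pk k (wk k a) a
        ≤ γ * ‖a - wstar‖ ^ 2) := by
  classical
  have hp' : (0:ℝ) < (p:ℝ) := Nat.cast_pos.mpr hp
  -- gradient of the average
  have hkey : ∀ a, ∑ k, gφ k a = (p:ℝ) • gF a := by
    intro a
    have h1 : HasFDerivAt (fun w => ∑ k, φ k w)
        (∑ k, InnerProductSpace.toDual ℝ (EuclideanSpace ℝ (Fin d)) (gφ k a)) a :=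
      HasFDerivAt.fun_sum (fun k _ => (hφgrad k a).hasFDerivAt)
    have h2 : HasFDerivAt (fun w => (p:ℝ) * F w)
        ((p:ℝ) • InnerProductSpace.toDual ℝ (EuclideanSpace ℝ (Fin d)) (gF a)) a :=
      (hFgrad a).hasFDerivAt.const_mul (p:ℝ)
    have heq : (fun w => (p:ℝ) * F w) = fun w => ∑ k, φ k w := by
      funext w; rw [hFavg w]; field_simp
    rw [heq] at h2
    have h3 := h2.unique h1
    have h4 : InnerProductSpace.toDual ℝ (EuclideanSpace ℝ (Fin d)) ((p:ℝ) • gF a)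
        = InnerProductSpace.toDual ℝ (EuclideanSpace ℝ (Fin d)) (∑ k, gφ k a) := by
      rw [map_sum]
      rw [show InnerProductSpace.toDual ℝ (EuclideanSpace ℝ (Fin d)) ((p:ℝ) • gF a)
          = (p:ℝ) • InnerProductSpace.toDual ℝ (EuclideanSpace ℝ (Fin d)) (gF a) by
        simp [map_smulₛₗ]]
      exact h3
    exact ((InnerProductSpace.toDual ℝ (EuclideanSpace ℝ (Fin d))).injective h4).symm
  -- stationarity at wstar
  have hstat : gF wstar + gR wstar = 0 := by
    have hmin : IsLocalMin (fun w => F w + R w) wstar := hwstar.isLocalMin Filter.univ_mem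
    have hderiv : HasFDerivAt (fun w => F w + R w)
        (InnerProductSpace.toDual ℝ (EuclideanSpace ℝ (Fin d)) (gF wstar) + InnerProductSpace.toDual ℝ (EuclideanSpace ℝ (Fin d)) (gR wstar))
        wstar := (hFgrad wstar).hasFDerivAt.add (hRgrad wstar).hasFDerivAt
    have h0 := hmin.hasFDerivAt_eq_zero hderiv
    have h1 : InnerProductSpace.toDual ℝ (EuclideanSpace ℝ (Fin d)) (gF wstar + gR wstar) = 0 := by
      rw [map_add]; exact h0
    exact (InnerProductSpace.toDual ℝ (EuclideanSpace ℝ (Fin d))).injective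
      (by rw [h1, map_zero])
  -- gradient of Pk(·;a)
  have hPgrad : ∀ k a w, HasGradientAt (fun w => Pk k w a)
      (gφ k w + (gF a - gφ k a) + gR w) w := by
    intro k a w
    have hv : HasFDerivAt (fun w : EuclideanSpace ℝ (Fin d) => (inner ℝ (gF a - gφ k a) w : ℝ))
        (InnerProductSpace.toDual ℝ (EuclideanSpace ℝ (Fin d)) (gF a - gφ k a)) w :=
      (InnerProductSpace.toDual ℝ (EuclideanSpace ℝ (Fin d)) (gF a - gφ k a)).hasFDerivAt
    have h1 : HasFDerivAt (fun w => φ k w + (inner ℝ (gF a - gφ k a) w : ℝ) + R w)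
        (InnerProductSpace.toDual ℝ (EuclideanSpace ℝ (Fin d)) (gφ k w) + InnerProductSpace.toDual ℝ (EuclideanSpace ℝ (Fin d)) (gF a - gφ k a)
          + InnerProductSpace.toDual ℝ (EuclideanSpace ℝ (Fin d)) (gR w)) w :=
      ((hφgrad k w).hasFDerivAt.add hv).add (hRgrad w).hasFDerivAt
    have h2 : HasFDerivAt (fun w => Pk k w a)
        (InnerProductSpace.toDual ℝ (EuclideanSpace ℝ (Fin d)) (gφ k w + (gF a - gφ k a) + gR w)) w := by
      rw [map_add, map_add]
      have : (fun w => Pk k w a) = fun w => φ k w + (inner ℝ (gF a - gφ k a) w : ℝ) + R w := by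
        funext w; exact hPk k w a
      rw [this]; exact h1
    rw [hasGradientAt_iff_hasFDerivAt]
    exact h2
  -- distance bound
  have hdist : ∀ k a, ‖wstar - wk k a‖ ≤ (Lk k + L) / μk k * ‖a - wstar‖ := by
    intro k a
    set v0 : EuclideanSpace ℝ (Fin d) := gF wstar - gφ k wstar with hv0
    set Δ : EuclideanSpace ℝ (Fin d) := (gF a - gφ k a) - v0 with hΔ
    have hf0sc : StrongConvexOn Set.univ (μk k) (fun w => Pk k w wstar) := by
      have h := aux_sc_linear (hsc k) v0
      have heq : (fun w : EuclideanSpace ℝ (Fin d) => (φ k w + R w) + (inner ℝ v0 w : ℝ)) = fun w => Pk k w wstar := by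
        funext w; rw [hPk k w wstar]; ring
      rwa [heq] at h
    have hminstar : IsMinOn (fun w => Pk k w wstar) Set.univ wstar := by
      apply aux_grad_min (strongConvexOn_zero.mp (hf0sc.mono (hμk k).le))
      have h := hPgrad k wstar wstar
      have : gφ k wstar + (gF wstar - gφ k wstar) + gR wstar = 0 := by
        rw [← hstat]; abel
      rwa [this] at h
    have hminA : IsMinOn (fun w => (fun w => Pk k w wstar) w + (inner ℝ Δ w : ℝ))
        Set.univ (wk k a) := by
      have heq : (fun w : EuclideanSpace ℝ (Fin d) => (fun w => Pk k w wstar) w + (inner ℝ Δ w : ℝ))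
          = fun w => Pk k w a := by
        funext w
        simp only [hPk k w wstar, hPk k w a, hΔ, hv0, inner_sub_left]
        ring
      rw [heq]; exact hwk k a
    have hle := aux_pert (hμk k) hf0sc Δ hminstar hminA
    have hΔle : ‖Δ‖ ≤ (Lk k + L) * ‖a - wstar‖ := by
      have hΔeq : Δ = (gF a - gF wstar) - (gφ k a - gφ k wstar) := by
        rw [hΔ, hv0]; abel
      calc ‖Δ‖ = ‖(gF a - gF wstar) - (gφ k a - gφ k wstar)‖ := by rw [hΔeq]
        _ ≤ ‖gF a - gF wstar‖ + ‖gφ k a - gφ k wstar‖ := norm_sub_le _ _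
        _ ≤ L * ‖a - wstar‖ + Lk k * ‖a - wstar‖ :=
            add_le_add (hFlip a wstar) (hφlip k a wstar)
        _ = (Lk k + L) * ‖a - wstar‖ := by ring
    calc ‖wstar - wk k a‖ ≤ ‖Δ‖ / μk k := hle
      _ ≤ ((Lk k + L) * ‖a - wstar‖) / μk k := (div_le_div_iff_of_pos_right (hμk k)).mpr hΔle
      _ = (Lk k + L) / μk k * ‖a - wstar‖ := by ring
  -- per-k gap bound
  have hgap : ∀ k a, Pk k wstar a - Pk k (wk k a) a
      ≤ L'' / 2 * ((Lk k + L) / μk k) ^ 2 * ‖a - wstar‖ ^ 2 := by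
    intro k a
    have h1 := hsmooth k a wstar
    have h2 : ‖wstar - wk k a‖ ^ 2 ≤ ((Lk k + L) / μk k * ‖a - wstar‖) ^ 2 := by
      apply pow_le_pow_left₀ (norm_nonneg _) (hdist k a)
    have h3 : L'' / 2 * ‖wstar - wk k a‖ ^ 2
        ≤ L'' / 2 * ((Lk k + L) / μk k) ^ 2 * ‖a - wstar‖ ^ 2 := by
      calc L'' / 2 * ‖wstar - wk k a‖ ^ 2
          ≤ L'' / 2 * ((Lk k + L) / μk k * ‖a - wstar‖) ^ 2 := by
            apply mul_le_mul_of_nonneg_left h2 (by positivity)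
        _ = L'' / 2 * ((Lk k + L) / μk k) ^ 2 * ‖a - wstar‖ ^ 2 := by ring
    linarith
  -- identity for the global value
  have hid : ∀ a, (1 / (p:ℝ)) * ∑ k, Pk k wstar a = F wstar + R wstar := by
    intro a
    have hinner : ∑ k, (inner ℝ (gF a - gφ k a) wstar : ℝ) = 0 := by
      rw [← sum_inner]
      have hz : ∑ k, (gF a - gφ k a) = 0 := by
        rw [Finset.sum_sub_distrib, Finset.sum_const, hkey a, Finset.card_univ,
          Fintype.card_fin, ← Nat.cast_smul_eq_nsmul ℝ, sub_self]
      rw [hz, inner_zero_left]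
    have hsum : ∑ k, Pk k wstar a
        = (∑ k, φ k wstar) + (∑ k, (inner ℝ (gF a - gφ k a) wstar : ℝ)) + ∑ _k : Fin p, R wstar := by
      rw [← Finset.sum_add_distrib, ← Finset.sum_add_distrib]
      exact Finset.sum_congr rfl (fun k _ => hPk k wstar a)
    rw [hsum, hinner, Finset.sum_const, Finset.card_univ, Fintype.card_fin]
    rw [hFavg wstar]
    field_simp
    ring
  have main : ∀ a, (F wstar + R wstar) - (1 / (p : ℝ)) * ∑ k, Pk k (wk k a) a
      ≤ ((1 / (p : ℝ)) * ∑ k, L'' / 2 * ((Lk k + L) / μk k) ^ 2) * ‖a - wstar‖ ^ 2 := by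
    intro a
    have h1 : ∑ k, (Pk k wstar a - Pk k (wk k a) a)
        ≤ ∑ k, L'' / 2 * ((Lk k + L) / μk k) ^ 2 * ‖a - wstar‖ ^ 2 :=
      Finset.sum_le_sum (fun k _ => hgap k a)
    have h2 : (F wstar + R wstar) - (1 / (p:ℝ)) * ∑ k, Pk k (wk k a) a
        = (1 / (p:ℝ)) * ∑ k, (Pk k wstar a - Pk k (wk k a) a) := by
      rw [Finset.sum_sub_distrib, mul_sub, hid a]
    have h3 : ((1 / (p:ℝ)) * ∑ k, L'' / 2 * ((Lk k + L) / μk k) ^ 2) * ‖a - wstar‖ ^ 2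
        = (1 / (p:ℝ)) * ∑ k, L'' / 2 * ((Lk k + L) / μk k) ^ 2 * ‖a - wstar‖ ^ 2 := by
      rw [mul_assoc, Finset.sum_mul]
    rw [h2, h3]
    exact mul_le_mul_of_nonneg_left h1 (by positivity)
  exact ⟨main, ⟨(1 / (p:ℝ)) * ∑ k, L'' / 2 * ((Lk k + L) / μk k) ^ 2, main⟩⟩
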